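/- The CNOT gate admits the measurement-based decomposition: for any input |ψ⟩_C ⊗ |+⟩_A ⊗ |φ⟩_T, applying the +1 projector (I + Z⊗Z)/2 on (C,A), then the +1 projector (I + X⊗X)/2 on (A,T), then ⟨0|_A, yields (1/2)·CNOT_{C→T}(|ψ⟩⊗|φ⟩) (up to a fixed nonzero global scalar independent of the input). -/
import Mathlib


open Matrix Kronecker

noncomputable section

abbrev Q := Fin 2
abbrev MQ := Matrix Q Q ℂ

/-- Pauli X matrix. -/
def PX : MQ := !![0, 1; 1, 0]
/-- Pauli Z matrix. -/
def PZ : MQ := !![1, 0; 0, -1]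
/-- Hadamard matrix. -/
def Had : MQ := (((Real.sqrt 2 : ℝ) : ℂ))⁻¹ • !![1, 1; 1, -1]

def ket0 : Q → ℂ := ![1, 0]
def ket1 : Q → ℂ := ![0, 1]
/-- |+⟩ = (|0⟩+|1⟩)/√2 -/
def ketP : Q → ℂ := (((Real.sqrt 2 : ℝ) : ℂ))⁻¹ • ![1, 1]

/-- Tensor product of two single-qubit states. -/
def tp2 (u v : Q → ℂ) : Q × Q → ℂ := fun p => u p.1 * v p.2
/-- Tensor product of three single-qubit states, grouped ((1,2),3). -/
def tp3 (u v w : Q → ℂ) : (Q × Q) × Q → ℂ := fun p => u p.1.1 * v p.1.2 * w p.2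

/-- Standard CNOT, first factor control, second target. -/
def CNOT2 : Matrix (Q × Q) (Q × Q) ℂ :=
  Matrix.of fun p q => if p.1 = q.1 ∧ p.2 = q.2 + q.1 then 1 else 0

/-- Single-qubit Pauli corrections: I, X, Z, XZ. -/
def IsPauli (P : MQ) : Prop := P = 1 ∨ P = PX ∨ P = PZ ∨ P = PX * PZ

/-- Z-copy spider (green) as a 4×2 matrix. -/
def dZm : Matrix (Q × Q) Q ℂ := Matrix.of fun p b => if p.1 = b ∧ p.2 = b then 1 else 0
/-- Z-merge spider (green) as a 2×4 matrix. -/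
def mZm : Matrix Q (Q × Q) ℂ := Matrix.of fun b p => if p.1 = b ∧ p.2 = b then 1 else 0
/-- X-copy spider (red): δ_X|±⟩=|±±⟩. -/
def dXm : Matrix (Q × Q) Q ℂ :=
  Matrix.of fun p b => if p.1 + p.2 = b then (((Real.sqrt 2 : ℝ) : ℂ))⁻¹ else 0
/-- X-merge spider (red): μ_X|±±⟩=|±⟩. -/
def mXm : Matrix Q (Q × Q) ℂ :=
  Matrix.of fun b p => if p.1 + p.2 = b then (((Real.sqrt 2 : ℝ) : ℂ))⁻¹ else 0
/-- Swap of the middle two wires of four, grouped ((1,2),(3,4)). -/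
def Smid : Matrix ((Q × Q) × (Q × Q)) ((Q × Q) × (Q × Q)) ℂ :=
  Matrix.of fun p q =>
    if p.1.1 = q.1.1 ∧ p.1.2 = q.2.1 ∧ p.2.1 = q.1.2 ∧ p.2.2 = q.2.2 then 1 else 0

/-- ZZ-parity projector with sign s on wires (C,A) of (C,A,T). -/
def PZZCA (s : ℂ) : Matrix ((Q × Q) × Q) ((Q × Q) × Q) ℂ :=
  (2:ℂ)⁻¹ • (1 + s • ((PZ ⊗ₖ PZ) ⊗ₖ (1 : MQ)))
/-- XX-parity projector with sign s on wires (A,T) of (C,A,T). -/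
def PXXAT (s : ℂ) : Matrix ((Q × Q) × Q) ((Q × Q) × Q) ℂ :=
  (2:ℂ)⁻¹ • (1 + s • (((1 : MQ) ⊗ₖ PX) ⊗ₖ PX))

/-- All-outcomes-trivial lattice-surgery CNOT: +1 ZZ projector on (C,A), then
+1 XX projector on (A,T), then ⟨0|_A, applied to ψ⊗|+⟩⊗φ, equals a fixed
nonzero scalar times CNOT_{C→T}(ψ⊗φ). -/
theorem stmt10 :
    ∃ c : ℂ, c ≠ 0 ∧ ∀ ψ φ : Q → ℂ,
      (fun p : Q × Q => ((PXXAT 1 * PZZCA 1).mulVec (tp3 ψ ketP φ)) ((p.1, 0), p.2))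
      = c • (CNOT2.mulVec (tp2 ψ φ)) := by
  refine ⟨(((Real.sqrt 2 : ℝ) : ℂ))⁻¹ * (2:ℂ)⁻¹, ?_, ?_⟩
  · have h : (Real.sqrt 2 : ℝ) ≠ 0 := by positivity
    simp [h]
  · intro ψ φ
    funext p
    obtain ⟨i, j⟩ := p
    fin_cases i <;> fin_cases j <;>
      simp [PXXAT, PZZCA, CNOT2, tp2, tp3, ketP, PX, PZ, Matrix.mulVec, dotProduct,
        Fintype.sum_prod_type, Fin.sum_univ_two, Matrix.mul_apply, Matrix.kroneckerMap_apply,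
        Matrix.one_apply, Matrix.smul_apply, Matrix.add_apply,
        Prod.ext_iff, Prod.fst_zero, Prod.snd_zero, Prod.fst_one, Prod.snd_one] <;> ring
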